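/- Let (E_r^{p,q}, d_r) be a spectral sequence of finite-dimensional vector spaces concentrated in 0 ≤ p,q ≤ 3 with E_2^{3,0} = E_2^{0,3} = 0, converging to a limit vanishing in total degrees 1 through 5. Then d_2 induces isomorphisms E_2^{0,1} ≅ E_2^{2,0}, E_2^{0,2} ≅ E_2^{2,1}, E_2^{1,2} ≅ E_2^{3,1}, and E_2^{1,3} ≅ E_2^{3,2}. -/

import Mathlib

/-- Transport along an equality of objects of `ModuleCat ℂ`. -/
def mcast {M N : ModuleCat ℂ} (h : M = N) : M →ₗ[ℂ] N := h ▸ LinearMap.id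

/-- A cohomological spectral sequence of complex vector spaces: pages `E r p q` for
`r ≥ 1`, differentials `d_r : E_r^{p,q} → E_r^{p+r,q-r+1}` squaring to zero, and an
identification of each next page with the cohomology (kernel modulo image) of the
previous one. -/
structure SpectralSeq where
  E : ℕ → ℤ → ℤ → ModuleCat ℂ
  d : ∀ r : ℕ, ∀ p q : ℤ, E r p q ⟶ E r (p + r) (q - r + 1)
  d_sq : ∀ r p q, (d r (p + r) (q - r + 1)).hom ∘ₗ (d r p q).hom = 0
  page : ∀ r : ℕ, 1 ≤ r → ∀ p q : ℤ,
    Nonempty ((E (r + 1) p q) ≃ₗ[ℂ]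
      (LinearMap.ker (d r p q).hom ⧸
        (LinearMap.range
            ((mcast (by congr 1 <;> ring)) ∘ₗ (d r (p - r) (q + r - 1)).hom :
              E r (p - r) (q + r - 1) →ₗ[ℂ] E r p q)).comap
          (LinearMap.ker (d r p q).hom).subtype))

lemma mcast_inj {M N : ModuleCat ℂ} (h : M = N) : Function.Injective (mcast h) := by
  subst h; exact fun a b hab => hab

lemma core_mem {A B C : Type*} [AddCommGroup A] [Module ℂ A] [AddCommGroup B] [Module ℂ B]
    [AddCommGroup C] [Module ℂ C] (f : A →ₗ[ℂ] B) (g : B →ₗ[ℂ] C)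
    (hQ : Subsingleton ((LinearMap.ker g) ⧸
      (LinearMap.range f).comap (LinearMap.ker g).subtype))
    {b : B} (hb : b ∈ LinearMap.ker g) : b ∈ LinearMap.range f := by
  have h : (Submodule.Quotient.mk (⟨b, hb⟩ : LinearMap.ker g) :
      (LinearMap.ker g) ⧸ (LinearMap.range f).comap (LinearMap.ker g).subtype) =
      Submodule.Quotient.mk 0 := Subsingleton.elim _ _
  rw [Submodule.Quotient.eq] at h
  simpa using h

lemma core_subB {A B C : Type*} [AddCommGroup A] [Module ℂ A] [AddCommGroup B] [Module ℂ B]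
    [AddCommGroup C] [Module ℂ C] (f : A →ₗ[ℂ] B) (g : B →ₗ[ℂ] C)
    (hA : Subsingleton A) (hC : Subsingleton C)
    (hQ : Subsingleton ((LinearMap.ker g) ⧸
      (LinearMap.range f).comap (LinearMap.ker g).subtype)) : Subsingleton B := by
  have key : ∀ b : B, b = 0 := by
    intro b
    have hb : b ∈ LinearMap.ker g := by
      simp only [LinearMap.mem_ker]; exact Subsingleton.elim _ _
    obtain ⟨a, ha⟩ := core_mem f g hQ hb
    rw [← ha, Subsingleton.elim a 0, map_zero]
  exact ⟨fun x y => by rw [key x, key y]⟩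

lemma core_inj {A B C : Type*} [AddCommGroup A] [Module ℂ A] [AddCommGroup B] [Module ℂ B]
    [AddCommGroup C] [Module ℂ C] (f : A →ₗ[ℂ] B) (g : B →ₗ[ℂ] C)
    (hA : Subsingleton A)
    (hQ : Subsingleton ((LinearMap.ker g) ⧸
      (LinearMap.range f).comap (LinearMap.ker g).subtype)) : Function.Injective g := by
  rw [← LinearMap.ker_eq_bot]
  rw [Submodule.eq_bot_iff]
  intro x hx
  obtain ⟨a, ha⟩ := core_mem f g hQ hx
  rw [← ha, Subsingleton.elim a 0, map_zero]

lemma core_surj {A B C : Type*} [AddCommGroup A] [Module ℂ A] [AddCommGroup B] [Module ℂ B]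
    [AddCommGroup C] [Module ℂ C] (f : A →ₗ[ℂ] B) (g : B →ₗ[ℂ] C)
    (hC : Subsingleton C)
    (hQ : Subsingleton ((LinearMap.ker g) ⧸
      (LinearMap.range f).comap (LinearMap.ker g).subtype)) : Function.Surjective f := by
  intro b
  have hb : b ∈ LinearMap.ker g := by
    simp only [LinearMap.mem_ker]; exact Subsingleton.elim _ _
  exact core_mem f g hQ hb

lemma surj_strip {A B C : Type*} [AddCommGroup A] [Module ℂ A] [AddCommGroup B] [Module ℂ B]
    [AddCommGroup C] [Module ℂ C] (f : A →ₗ[ℂ] B) (e : B →ₗ[ℂ] C)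
    (he : Function.Injective e) (h : Function.Surjective (e ∘ₗ f)) :
    Function.Surjective f := by
  intro y; obtain ⟨x, hx⟩ := h (e y); exact ⟨x, he hx⟩

/-- If the next page vanishes at a spot and the incoming/outgoing spots on the current
page vanish, then the current page vanishes at that spot. -/
lemma descend (S : SpectralSeq) (r : ℕ) (hr : 1 ≤ r) (p q : ℤ)
    (hA : Subsingleton (S.E r (p - r) (q + r - 1)))
    (hC : Subsingleton (S.E r (p + r) (q - r + 1)))
    (hNext : Subsingleton (S.E (r + 1) p q)) : Subsingleton (S.E r p q) := by
  obtain ⟨e⟩ := S.page r hr p q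
  haveI := hNext
  have hQ := e.symm.toEquiv.subsingleton
  exact core_subB _ (S.d r p q).hom hA hC hQ

/-- The next page at a vanishing spot vanishes. -/
lemma ascend (S : SpectralSeq) (r : ℕ) (hr : 1 ≤ r) (p q : ℤ)
    (h : Subsingleton (S.E r p q)) : Subsingleton (S.E (r + 1) p q) := by
  obtain ⟨e⟩ := S.page r hr p q
  haveI := h
  haveI : Subsingleton (LinearMap.ker (S.d r p q).hom) := by
    exact ⟨fun x y => Subtype.ext (Subsingleton.elim _ _)⟩
  haveI := (Submodule.Quotient.mk_surjective
    ((LinearMap.range ((mcast (by congr 1 <;> ring)) ∘ₗ (S.d r (p - r) (q + r - 1)).hom :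
        S.E r (p - r) (q + r - 1) →ₗ[ℂ] S.E r p q)).comap
      (LinearMap.ker (S.d r p q).hom).subtype)).subsingleton
  exact e.toEquiv.subsingleton

lemma page_inj (S : SpectralSeq) (p q : ℤ)
    (hA : Subsingleton (S.E 2 (p - (2 : ℕ)) (q + (2 : ℕ) - 1)))
    (h3 : Subsingleton (S.E 3 p q)) : Function.Injective (S.d 2 p q) := by
  obtain ⟨e⟩ := S.page 2 one_le_two p q
  haveI : Subsingleton (S.E (2 + 1) p q) := h3
  have hQ := e.symm.toEquiv.subsingleton
  exact core_inj _ (S.d 2 p q).hom hA hQ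

lemma page_surj (S : SpectralSeq) (p q : ℤ)
    (hC : Subsingleton (S.E 2 (p + (2 : ℕ)) (q - (2 : ℕ) + 1)))
    (h3 : Subsingleton (S.E 3 p q)) :
    Function.Surjective (S.d 2 (p - (2 : ℕ)) (q + (2 : ℕ) - 1)) := by
  obtain ⟨e⟩ := S.page 2 one_le_two p q
  haveI : Subsingleton (S.E (2 + 1) p q) := h3
  have hQ := e.symm.toEquiv.subsingleton
  have hs := core_surj _ (S.d 2 p q).hom hC hQ
  exact surj_strip _ _ (mcast_inj _) hs

theorem stmt8 (S : SpectralSeq)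
    (hconc : ∀ (r : ℕ) (p q : ℤ), ¬(0 ≤ p ∧ p ≤ 3 ∧ 0 ≤ q ∧ q ≤ 3) →
      Subsingleton (S.E r p q))
    (hfd : ∀ (r : ℕ) (p q : ℤ), FiniteDimensional ℂ (S.E r p q))
    (hE230 : Subsingleton (S.E 2 3 0)) (hE203 : Subsingleton (S.E 2 0 3))
    (hlim : ∀ k : ℤ, 1 ≤ k → k ≤ 5 →
      ∑ p ∈ Finset.Icc (0 : ℤ) 3, Module.finrank ℂ (S.E 5 p (k - p)) = 0) :
    Function.Bijective (S.d 2 0 1) ∧ Function.Bijective (S.d 2 0 2) ∧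
    Function.Bijective (S.d 2 1 2) ∧ Function.Bijective (S.d 2 1 3) := by
  -- E_5 vanishes in total degrees 1..5 in the strip
  have h5 : ∀ p q : ℤ, 0 ≤ p → p ≤ 3 → 1 ≤ p + q → p + q ≤ 5 →
      Subsingleton (S.E 5 p q) := by
    intro p q h0 h3 hk1 hk5
    have hs := hlim (p + q) hk1 hk5
    rw [Finset.sum_eq_zero_iff] at hs
    have h := hs p (Finset.mem_Icc.mpr ⟨h0, h3⟩)
    rw [show p + q - p = q by ring] at h
    haveI := hfd 5 p q
    exact Module.finrank_zero_iff.mp h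
  -- E_3 vanishes at the eight relevant spots
  have h3 : ∀ p q : ℤ, 0 ≤ p → p ≤ 3 → 0 ≤ q → q ≤ 3 → 1 ≤ p + q → p + q ≤ 5 →
      Subsingleton (S.E 3 (p + (3 : ℕ)) (q - (3 : ℕ) + 1)) →
      Subsingleton (S.E 3 (p - (3 : ℕ)) (q + (3 : ℕ) - 1)) →
      Subsingleton (S.E 3 p q) := by
    intro p q h0p h3p h0q h3q hk1 hk5 hout hin
    have e5 : Subsingleton (S.E 5 p q) := h5 p q h0p h3p hk1 hk5
    have e4 : Subsingleton (S.E 4 p q) := by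
      refine descend S 4 (by norm_num) p q ?_ ?_ e5
      · exact hconc 4 _ _ (by push_cast; omega)
      · exact hconc 4 _ _ (by push_cast; omega)
    refine descend S 3 (by norm_num) p q ?_ ?_ e4
    · exact hin
    · exact hout
  -- generic out-of-range E_3 subsingleton
  have h3c : ∀ p q : ℤ, ¬(0 ≤ p ∧ p ≤ 3 ∧ 0 ≤ q ∧ q ≤ 3) → Subsingleton (S.E 3 p q) :=
    fun p q h => hconc 3 p q h
  have e330 : Subsingleton (S.E 3 3 0) := ascend S 2 one_le_two 3 0 hE230
  have e303 : Subsingleton (S.E 3 0 3) := ascend S 2 one_le_two 0 3 hE203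
  -- the eight E_3 vanishings
  have a01 : Subsingleton (S.E 3 0 1) :=
    h3 0 1 (by norm_num) (by norm_num) (by norm_num) (by norm_num) (by norm_num)
      (by norm_num) (h3c _ _ (by norm_num)) (h3c _ _ (by norm_num))
  have a20 : Subsingleton (S.E 3 2 0) :=
    h3 2 0 (by norm_num) (by norm_num) (by norm_num) (by norm_num) (by norm_num)
      (by norm_num) (h3c _ _ (by norm_num)) (h3c _ _ (by norm_num))
  have a02 : Subsingleton (S.E 3 0 2) :=
    h3 0 2 (by norm_num) (by norm_num) (by norm_num) (by norm_num) (by norm_num)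
      (by norm_num) e330 (h3c _ _ (by norm_num))
  have a21 : Subsingleton (S.E 3 2 1) :=
    h3 2 1 (by norm_num) (by norm_num) (by norm_num) (by norm_num) (by norm_num)
      (by norm_num) (h3c _ _ (by norm_num)) (h3c _ _ (by norm_num))
  have a12 : Subsingleton (S.E 3 1 2) :=
    h3 1 2 (by norm_num) (by norm_num) (by norm_num) (by norm_num) (by norm_num)
      (by norm_num) (h3c _ _ (by norm_num)) (h3c _ _ (by norm_num))
  have a31 : Subsingleton (S.E 3 3 1) :=
    h3 3 1 (by norm_num) (by norm_num) (by norm_num) (by norm_num) (by norm_num)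
      (by norm_num) (h3c _ _ (by norm_num)) e303
  have a13 : Subsingleton (S.E 3 1 3) :=
    h3 1 3 (by norm_num) (by norm_num) (by norm_num) (by norm_num) (by norm_num)
      (by norm_num) (h3c _ _ (by norm_num)) (h3c _ _ (by norm_num))
  have a32 : Subsingleton (S.E 3 3 2) :=
    h3 3 2 (by norm_num) (by norm_num) (by norm_num) (by norm_num) (by norm_num)
      (by norm_num) (h3c _ _ (by norm_num)) (h3c _ _ (by norm_num))
  refine ⟨⟨?_, ?_⟩, ⟨?_, ?_⟩, ⟨?_, ?_⟩, ⟨?_, ?_⟩⟩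
  · exact page_inj S 0 1 (hconc 2 (0 - ((2:ℕ):ℤ)) (1 + ((2:ℕ):ℤ) - 1) (by decide)) a01
  · exact page_surj S 2 0 (hconc 2 (2 + ((2:ℕ):ℤ)) (0 - ((2:ℕ):ℤ) + 1) (by decide)) a20
  · exact page_inj S 0 2 (hconc 2 (0 - ((2:ℕ):ℤ)) (2 + ((2:ℕ):ℤ) - 1) (by decide)) a02
  · exact page_surj S 2 1 (hconc 2 (2 + ((2:ℕ):ℤ)) (1 - ((2:ℕ):ℤ) + 1) (by decide)) a21
  · exact page_inj S 1 2 (hconc 2 (1 - ((2:ℕ):ℤ)) (2 + ((2:ℕ):ℤ) - 1) (by decide)) a12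
  · exact page_surj S 3 1 (hconc 2 (3 + ((2:ℕ):ℤ)) (1 - ((2:ℕ):ℤ) + 1) (by decide)) a31
  · exact page_inj S 1 3 (hconc 2 (1 - ((2:ℕ):ℤ)) (3 + ((2:ℕ):ℤ) - 1) (by decide)) a13
  · exact page_surj S 3 2 (hconc 2 (3 + ((2:ℕ):ℤ)) (2 - ((2:ℕ):ℤ) + 1) (by decide)) a32
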